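/- Let Φ be an irreducible crystallographic root system, S ⊆ Π containing all short simple roots, and β ∈ Φ. Then all roots in Φ_{S,β} = {γ ∈ Φ : c_α(γ)=c_α(β) ∀α∈S} have the same length. -/

import Mathlib

open scoped RealInnerProductSpace
attribute [local instance] Classical.propDecidable

variable {E : Type*} [NormedAddCommGroup E] [InnerProductSpace ℝ E] [FiniteDimensional ℝ E]

/-- A finite reduced crystallographic root system spanning `E`. -/
structure IsRootSystem (Φ : Finset E) : Prop where
  nonzero : ∀ γ ∈ Φ, γ ≠ (0 : E)
  span_top : Submodule.span ℝ (Φ : Set E) = ⊤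
  reduced : ∀ γ ∈ Φ, ∀ t : ℝ, t • γ ∈ Φ → t = 1 ∨ t = -1
  reflect : ∀ γ ∈ Φ, ∀ δ ∈ Φ, δ - (2 * ⟪δ, γ⟫ / ⟪γ, γ⟫) • γ ∈ Φ
  cry : ∀ γ ∈ Φ, ∀ δ ∈ Φ, ∃ n : ℤ, 2 * ⟪δ, γ⟫ / ⟪γ, γ⟫ = (n : ℝ)

/-- `Δ` is a simple system (base) for `Φ`, and `c γ a` is the coordinate of `γ`
on the simple root `a`. -/
structure IsBase (Φ Δ : Finset E) (c : E → E → ℝ) : Prop where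
  subset : Δ ⊆ Φ
  indep : LinearIndependent ℝ (fun x : (Δ : Set E) => (x : E))
  repr : ∀ γ ∈ Φ, γ = ∑ a ∈ Δ, c γ a • a
  int : ∀ γ ∈ Φ, ∀ a ∈ Δ, ∃ n : ℤ, c γ a = (n : ℝ)
  sign : ∀ γ ∈ Φ, (∀ a ∈ Δ, 0 ≤ c γ a) ∨ (∀ a ∈ Δ, c γ a ≤ 0)

/-- Irreducibility: no splitting into two nonempty mutually orthogonal parts. -/
def IsIrredSys (Φ : Finset E) : Prop :=
  ∀ s : Set E, s ⊆ (Φ : Set E) → (∀ x ∈ s, ∀ y ∈ (Φ : Set E) \ s, ⟪x, y⟫ = 0) →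
    s = ∅ ∨ s = (Φ : Set E)

/-- `Φ_{S,β}`: roots whose coordinates on every simple root of `S` agree with those of `β`. -/
def lev (Φ : Finset E) (c : E → E → ℝ) (S : Finset E) (β : E) : Set E :=
  {γ | γ ∈ Φ ∧ ∀ a ∈ S, c γ a = c β a}

section RootSystemAux

omit [FiniteDimensional ℝ E] in
theorem base_coeff_zero (Δ : Finset E)
    (hind : LinearIndependent ℝ (fun x : (Δ : Set E) => (x : E)))
    (f : E → ℝ) (hf : ∑ b ∈ Δ, f b • b = 0) : ∀ b ∈ Δ, f b = 0 := by
  intro b hb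
  have key : ∑ x : (Δ : Set E), f x • (x : E) = 0 := by
    rw [Finset.sum_finset_coe (f := fun b => f b • b)]; exact hf
  exact linearIndependent_iff'.mp hind Finset.univ (fun x => f x)
    (by simpa using key) ⟨b, hb⟩ (Finset.mem_univ _)

omit [FiniteDimensional ℝ E] in
theorem base_coeff_eq {Φ Δ : Finset E} {c : E → E → ℝ} (hB : IsBase Φ Δ c) {γ : E}
    (hγ : γ ∈ Φ) (f : E → ℝ) (hf : γ = ∑ b ∈ Δ, f b • b) : ∀ b ∈ Δ, c γ b = f b := by
  intro b hb
  have h0 : ∑ b ∈ Δ, (c γ b - f b) • b = 0 := by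
    simp only [sub_smul, Finset.sum_sub_distrib, ← hB.repr γ hγ, ← hf, sub_self]
  have := base_coeff_zero Δ hB.indep _ h0 b hb
  linarith

omit [FiniteDimensional ℝ E] in
theorem base_coeff_simple {Φ Δ : Finset E} {c : E → E → ℝ} (hB : IsBase Φ Δ c) {a : E}
    (ha : a ∈ Δ) : ∀ b ∈ Δ, c a b = if b = a then 1 else 0 := by
  apply base_coeff_eq hB (hB.subset ha)
  rw [Finset.sum_congr rfl (fun b _ => by rw [ite_smul, one_smul, zero_smul])]
  rw [Finset.sum_ite_eq' Δ a (fun b => b), if_pos ha]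

theorem rs_inner_self_pos {Φ : Finset E} (hΦ : IsRootSystem Φ) {γ : E} (hγ : γ ∈ Φ) :
    (0:ℝ) < ⟪γ, γ⟫ :=
  lt_of_le_of_ne real_inner_self_nonneg
    (Ne.symm (inner_self_ne_zero.mpr (hΦ.nonzero γ hγ)))

theorem rs_neg_mem {Φ : Finset E} (hΦ : IsRootSystem Φ) {γ : E} (hγ : γ ∈ Φ) : -γ ∈ Φ := by
  have h := hΦ.reflect γ hγ γ hγ
  rw [mul_div_assoc, div_self (rs_inner_self_pos hΦ hγ).ne', mul_one] at h
  simpa [two_smul] using h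

theorem base_coeff_neg {Φ Δ : Finset E} {c : E → E → ℝ} (hΦ : IsRootSystem Φ)
    (hB : IsBase Φ Δ c) {γ : E} (hγ : γ ∈ Φ) : ∀ b ∈ Δ, c (-γ) b = -(c γ b) := by
  apply base_coeff_eq hB (rs_neg_mem hΦ hγ)
  rw [Finset.sum_congr rfl (fun b _ => by rw [neg_smul]), Finset.sum_neg_distrib,
    ← hB.repr γ hγ]

omit [FiniteDimensional ℝ E] in
theorem sum_update_helper (Δ : Finset E) {b : E} (hb : b ∈ Δ) (f g : E → ℝ)
    (hoff : ∀ b' ∈ Δ, b' ≠ b → f b' = g b') (hfb : f b = g b - 1) :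
    ∑ b' ∈ Δ, f b' = (∑ b' ∈ Δ, g b') - 1 := by
  rw [← Finset.add_sum_erase Δ f hb, ← Finset.add_sum_erase Δ g hb, hfb]
  rw [Finset.sum_congr rfl
    (fun x hx => hoff x (Finset.mem_of_mem_erase hx) (Finset.ne_of_mem_erase hx))]
  ring

theorem rs_move {Φ : Finset E} (hΦ : IsRootSystem Φ) {γ δ : E} (hγ : γ ∈ Φ) (hδ : δ ∈ Φ)
    (hlen : ‖γ‖ ≤ ‖δ‖) (hne : γ ≠ δ) (hne' : γ ≠ -δ) (hpos : 0 < ⟪γ, δ⟫) :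
    γ - δ ∈ Φ ∧ ‖γ - δ‖ = ‖γ‖ := by
  have hδ0 : δ ≠ 0 := hΦ.nonzero δ hδ
  have hδδ : (0:ℝ) < ⟪δ, δ⟫ := rs_inner_self_pos hΦ hδ
  obtain ⟨n, hn⟩ := hΦ.cry δ hδ γ hγ
  have hnpos : (0:ℝ) < (n:ℝ) := by rw [← hn]; positivity
  have hpar : ‖δ‖ • γ ≠ ‖γ‖ • δ := by
    intro h
    have hδn : (0:ℝ) < ‖δ‖ := norm_pos_iff.mpr hδ0
    have hγd : γ = (‖δ‖⁻¹ * ‖γ‖) • δ := by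
      have h2 := congrArg (fun x => (‖δ‖)⁻¹ • x) h
      simp only [smul_smul, inv_mul_cancel₀ hδn.ne', one_smul] at h2
      exact h2
    rcases hΦ.reduced δ hδ (‖δ‖⁻¹ * ‖γ‖) (hγd ▸ hγ) with h1 | h1
    · exact hne (by rw [hγd, h1, one_smul])
    · exact hne' (by rw [hγd, h1, neg_one_smul])
  have hCS : ⟪γ, δ⟫ < ‖γ‖ * ‖δ‖ := inner_lt_norm_mul_iff_real.mpr hpar
  have hlt2 : (n:ℝ) < 2 := by
    rw [← hn, div_lt_iff₀ hδδ]
    have : ‖γ‖ * ‖δ‖ ≤ ⟪δ, δ⟫ := by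
      rw [real_inner_self_eq_norm_mul_norm]
      exact mul_le_mul_of_nonneg_right hlen (norm_nonneg δ)
    nlinarith
  have hn1 : n = 1 := by
    have h0 : 0 < n := by exact_mod_cast hnpos
    have h2 : n < 2 := by exact_mod_cast hlt2
    omega
  rw [hn1] at hn
  have h2γδ : 2 * ⟪γ, δ⟫ = ⟪δ, δ⟫ := by
    field_simp at hn; push_cast at hn; linarith
  have hmem : γ - δ ∈ Φ := by
    have := hΦ.reflect δ hδ γ hγ
    rwa [hn, Int.cast_one, one_smul] at this
  refine ⟨hmem, ?_⟩
  have hsq : ‖γ - δ‖ ^ 2 = ‖γ‖ ^ 2 := by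
    have := norm_sub_sq_real γ δ
    rw [real_inner_self_eq_norm_mul_norm] at h2γδ
    nlinarith [this]
  nlinarith [norm_nonneg (γ - δ), norm_nonneg γ, hsq]

theorem rs_move_add {Φ : Finset E} (hΦ : IsRootSystem Φ) {γ δ : E} (hγ : γ ∈ Φ) (hδ : δ ∈ Φ)
    (hlen : ‖γ‖ ≤ ‖δ‖) (hne : γ ≠ δ) (hne' : γ ≠ -δ) (hneg : ⟪γ, δ⟫ < 0) :
    γ + δ ∈ Φ ∧ ‖γ + δ‖ = ‖γ‖ := by
  have h := rs_move hΦ hγ (rs_neg_mem hΦ hδ) (by rwa [norm_neg])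
    (by simpa using hne') (by simpa using hne)
    (by rw [inner_neg_right]; linarith)
  rwa [sub_neg_eq_add] at h

end RootSystemAux

section RootSystemMain

theorem rs_lem3 {Φ Δ S : Finset E} {c : E → E → ℝ}
    (hΦ : IsRootSystem Φ) (hB : IsBase Φ Δ c)
    (hmax : ∀ b ∈ Δ, b ∉ S → ∀ δ ∈ Φ, ‖δ‖ ≤ ‖b‖)
    {a0 : E} (ha0 : a0 ∈ Δ) (ha0S : a0 ∉ S) :
    ∀ N : ℕ, ∀ γ ∈ Φ, (∀ b ∈ Δ, 0 ≤ c γ b) → (∀ b ∈ Δ, b ∈ S → c γ b = 0) →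
      (∑ b ∈ Δ, c γ b ≤ (N:ℝ)) → ‖γ‖ = ‖a0‖ := by
  intro N
  induction N with
  | zero =>
    intro γ hγ hpos hzero hsum
    exfalso
    apply hΦ.nonzero γ hγ
    have h0 : ∑ b ∈ Δ, c γ b = 0 :=
      le_antisymm (by simpa using hsum) (Finset.sum_nonneg hpos)
    have hall := (Finset.sum_eq_zero_iff_of_nonneg hpos).mp h0
    rw [hB.repr γ hγ]
    exact Finset.sum_eq_zero fun b hb => by rw [hall b hb, zero_smul]
  | succ n ih =>
    intro γ hγ hpos hzero hsum
    have hγγ : (0:ℝ) < ⟪γ, γ⟫ := rs_inner_self_pos hΦ hγ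
    have hexp : ⟪γ, γ⟫ = ∑ b ∈ Δ, c γ b * ⟪γ, b⟫ := by
      nth_rewrite 2 [hB.repr γ hγ]
      rw [inner_sum]
      exact Finset.sum_congr rfl fun b _ => real_inner_smul_right γ b (c γ b)
    have hex : ∃ b ∈ Δ, 0 < c γ b * ⟪γ, b⟫ := by
      by_contra hcon
      push_neg at hcon
      have := Finset.sum_nonpos hcon
      rw [← hexp] at this; linarith
    obtain ⟨b, hbΔ, hprod⟩ := hex
    have hcb : 0 < c γ b := by
      rcases lt_or_eq_of_le (hpos b hbΔ) with h | h
      · exact h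
      · rw [← h, zero_mul] at hprod; exact absurd hprod (lt_irrefl 0)
    have hip : 0 < ⟪γ, b⟫ := by
      by_contra h
      push_neg at h
      nlinarith
    have hbS : b ∉ S := fun hbs => by
      rw [hzero b hbΔ hbs] at hcb; exact lt_irrefl 0 hcb
    have hbΦ : b ∈ Φ := hB.subset hbΔ
    by_cases hgb : γ = b
    · rw [hgb]
      have h1 := hmax b hbΔ hbS a0 (hB.subset ha0)
      have h2 := hmax a0 ha0 ha0S b hbΦ
      linarith
    · have hgnb : γ ≠ -b := by
        intro h
        have hcnb := base_coeff_neg hΦ hB hbΦ b hbΔ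
        rw [base_coeff_simple hB hbΔ b hbΔ, if_pos rfl] at hcnb
        rw [h, hcnb] at hcb; linarith
      obtain ⟨hmem, hnorm⟩ := rs_move hΦ hγ hbΦ (hmax b hbΔ hbS γ hγ) hgb hgnb hip
      have hrepr : γ - b = ∑ b' ∈ Δ, (c γ b' - if b' = b then 1 else 0) • b' := by
        rw [Finset.sum_congr rfl (fun b' _ => by rw [sub_smul, ite_smul, one_smul, zero_smul]),
          Finset.sum_sub_distrib, Finset.sum_ite_eq' Δ b (fun b' => b'), if_pos hbΔ,
          ← hB.repr γ hγ]
      have hcoef := base_coeff_eq hB hmem _ hrepr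
      obtain ⟨k, hk⟩ := hB.int γ hγ b hbΔ
      have hk1 : (1:ℝ) ≤ c γ b := by
        have hk0 : (0:ℤ) < k := by exact_mod_cast (hk ▸ hcb)
        have : (1:ℤ) ≤ k := hk0
        rw [hk]; exact_mod_cast this
      rw [← hnorm]
      apply ih (γ - b) hmem
      · intro b' hb'
        rw [hcoef b' hb']
        by_cases h : b' = b
        · rw [if_pos h, h]; linarith
        · rw [if_neg h, sub_zero]; exact hpos b' hb'
      · intro s hsΔ hsS
        have hsb : s ≠ b := fun h => hbS (h ▸ hsS)
        rw [hcoef s hsΔ, if_neg hsb, sub_zero]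
        exact hzero s hsΔ hsS
      · have heq : ∑ b' ∈ Δ, c (γ - b) b' = (∑ b' ∈ Δ, c γ b') - 1 := by
          apply sum_update_helper Δ hbΔ
          · intro b' hb' hne'
            rw [hcoef b' hb', if_neg hne', sub_zero]
          · rw [hcoef b hbΔ, if_pos rfl]
        rw [heq]
        push_cast at hsum ⊢
        linarith

theorem rs_lem3' {Φ Δ S : Finset E} {c : E → E → ℝ}
    (hΦ : IsRootSystem Φ) (hB : IsBase Φ Δ c)
    (hmax : ∀ b ∈ Δ, b ∉ S → ∀ δ ∈ Φ, ‖δ‖ ≤ ‖b‖)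
    {a0 : E} (ha0 : a0 ∈ Δ) (ha0S : a0 ∉ S) :
    ∀ γ ∈ Φ, (∀ b ∈ Δ, b ∈ S → c γ b = 0) → ‖γ‖ = ‖a0‖ := by
  intro γ hγ hzero
  rcases hB.sign γ hγ with hsg | hsg
  · obtain ⟨N, hN⟩ := exists_nat_ge (∑ b ∈ Δ, c γ b)
    exact rs_lem3 hΦ hB hmax ha0 ha0S N γ hγ hsg hzero hN
  · have hneg := rs_neg_mem hΦ hγ
    have hc := base_coeff_neg hΦ hB hγ
    obtain ⟨N, hN⟩ := exists_nat_ge (∑ b ∈ Δ, c (-γ) b)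
    have := rs_lem3 hΦ hB hmax ha0 ha0S N (-γ) hneg
      (fun b hb => by rw [hc b hb]; linarith [hsg b hb])
      (fun b hb hbs => by rw [hc b hb, hzero b hb hbs, neg_zero]) hN
    rwa [norm_neg] at this

theorem rs_step {Φ Δ S : Finset E} {c : E → E → ℝ}
    (hΦ : IsRootSystem Φ) (hB : IsBase Φ Δ c) (hSΔ : S ⊆ Δ)
    (hmax : ∀ b ∈ Δ, b ∉ S → ∀ δ ∈ Φ, ‖δ‖ ≤ ‖b‖)
    {γ γ' : E} (hγ : γ ∈ Φ) (hγ' : γ' ∈ Φ)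
    (hagree : ∀ s ∈ S, c γ s = c γ' s) (hne : γ ≠ γ')
    (h1 : 0 < ⟪γ', γ' - γ⟫) :
    ‖γ‖ = ‖γ'‖ ∨ ∃ γ'' ∈ Φ, ‖γ''‖ = ‖γ'‖ ∧ (∀ s ∈ S, c γ s = c γ'' s) ∧
      ∑ b ∈ Δ, |c γ'' b - c γ b| = (∑ b ∈ Δ, |c γ' b - c γ b|) - 1 := by
  have hv : γ' - γ = ∑ b ∈ Δ, (c γ' b - c γ b) • b := by
    rw [Finset.sum_congr rfl (fun b _ => by rw [sub_smul]), Finset.sum_sub_distrib,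
      ← hB.repr γ hγ, ← hB.repr γ' hγ']
  have hexp : ⟪γ', γ' - γ⟫ = ∑ b ∈ Δ, (c γ' b - c γ b) * ⟪γ', b⟫ := by
    rw [hv, inner_sum]
    exact Finset.sum_congr rfl fun b _ => real_inner_smul_right _ _ _
  have hex : ∃ b ∈ Δ, 0 < (c γ' b - c γ b) * ⟪γ', b⟫ := by
    by_contra hcon
    push_neg at hcon
    have := Finset.sum_nonpos hcon
    rw [← hexp] at this; linarith
  obtain ⟨b, hbΔ, hprod⟩ := hex
  have hnnb : c γ' b - c γ b ≠ 0 := fun h => by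
    rw [h, zero_mul] at hprod; exact lt_irrefl 0 hprod
  have hbS : b ∉ S := fun hbs => hnnb (by rw [hagree b hbs]; ring)
  have hmaxb := hmax b hbΔ hbS
  have hbΦ : b ∈ Φ := hB.subset hbΔ
  obtain ⟨k1, hk1⟩ := hB.int γ' hγ' b hbΔ
  obtain ⟨k2, hk2⟩ := hB.int γ hγ b hbΔ
  by_cases hend : γ' = b ∨ γ' = -b
  · left
    have hz' : ∀ s ∈ Δ, s ∈ S → c γ' s = 0 := by
      intro s hsΔ hsS
      have hsb : s ≠ b := fun h => hbS (h ▸ hsS)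
      rcases hend with h | h
      · rw [h, base_coeff_simple hB hbΔ s hsΔ, if_neg hsb]
      · rw [h, base_coeff_neg hΦ hB hbΦ s hsΔ, base_coeff_simple hB hbΔ s hsΔ,
          if_neg hsb, neg_zero]
    have hz : ∀ s ∈ Δ, s ∈ S → c γ s = 0 := fun s hsΔ hsS =>
      (hagree s hsS).trans (hz' s hsΔ hsS)
    rw [rs_lem3' hΦ hB hmax hbΔ hbS γ hγ hz, rs_lem3' hΦ hB hmax hbΔ hbS γ' hγ' hz']
  · push_neg at hend
    right
    rcases mul_pos_iff.mp hprod with ⟨ha, hb'⟩ | ⟨ha, hb'⟩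
    · -- c γ' b - c γ b > 0 and ⟪γ', b⟫ > 0 : step down
      obtain ⟨hmem, hnorm⟩ := rs_move hΦ hγ' hbΦ (hmaxb γ' hγ') hend.1 hend.2 hb'
      have hrepr : γ' - b = ∑ b' ∈ Δ, (c γ' b' - if b' = b then 1 else 0) • b' := by
        rw [Finset.sum_congr rfl (fun b' _ => by rw [sub_smul, ite_smul, one_smul, zero_smul]),
          Finset.sum_sub_distrib, Finset.sum_ite_eq' Δ b (fun b' => b'), if_pos hbΔ,
          ← hB.repr γ' hγ']
      have hcoef := base_coeff_eq hB hmem _ hrepr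
      have hge1 : (1:ℝ) ≤ c γ' b - c γ b := by
        have h0 : (0:ℤ) < k1 - k2 := by
          have : (0:ℝ) < (k1:ℝ) - (k2:ℝ) := by rw [← hk1, ← hk2]; exact ha
          exact_mod_cast this
        have : (1:ℤ) ≤ k1 - k2 := h0
        rw [hk1, hk2]; exact_mod_cast this
      refine ⟨γ' - b, hmem, hnorm, ?_, ?_⟩
      · intro s hsS
        have hsb : s ≠ b := fun h => hbS (h ▸ hsS)
        rw [hcoef s (hSΔ hsS), if_neg hsb, sub_zero]
        exact hagree s hsS
      · apply sum_update_helper Δ hbΔ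
        · intro b' hb' hne'
          rw [hcoef b' hb', if_neg hne', sub_zero]
        · rw [hcoef b hbΔ, if_pos rfl]
          rw [abs_of_nonneg (by linarith), abs_of_nonneg (by linarith)]
          ring
    · -- c γ' b - c γ b < 0 and ⟪γ', b⟫ < 0 : step up
      obtain ⟨hmem, hnorm⟩ := rs_move_add hΦ hγ' hbΦ (hmaxb γ' hγ') hend.1 hend.2 hb'
      have hrepr : γ' + b = ∑ b' ∈ Δ, (c γ' b' + if b' = b then 1 else 0) • b' := by
        rw [Finset.sum_congr rfl (fun b' _ => by rw [add_smul, ite_smul, one_smul, zero_smul]),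
          Finset.sum_add_distrib, Finset.sum_ite_eq' Δ b (fun b' => b'), if_pos hbΔ,
          ← hB.repr γ' hγ']
      have hcoef := base_coeff_eq hB hmem _ hrepr
      have hle1 : c γ' b - c γ b ≤ -1 := by
        have h0 : k1 - k2 < (0:ℤ) := by
          have : (k1:ℝ) - (k2:ℝ) < 0 := by rw [← hk1, ← hk2]; exact ha
          exact_mod_cast this
        have : k1 - k2 ≤ (-1:ℤ) := by omega
        rw [hk1, hk2]
        calc (k1:ℝ) - (k2:ℝ) = ((k1 - k2 : ℤ) : ℝ) := by push_cast; ring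
          _ ≤ ((-1:ℤ):ℝ) := by exact_mod_cast this
          _ = -1 := by norm_num
      refine ⟨γ' + b, hmem, hnorm, ?_, ?_⟩
      · intro s hsS
        have hsb : s ≠ b := fun h => hbS (h ▸ hsS)
        rw [hcoef s (hSΔ hsS), if_neg hsb, add_zero]
        exact hagree s hsS
      · apply sum_update_helper Δ hbΔ
        · intro b' hb' hne'
          rw [hcoef b' hb', if_neg hne', add_zero]
        · rw [hcoef b hbΔ, if_pos rfl]
          rw [abs_of_nonpos (by linarith), abs_of_nonpos (by linarith)]
          ring

theorem rs_key {Φ Δ S : Finset E} {c : E → E → ℝ}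
    (hΦ : IsRootSystem Φ) (hB : IsBase Φ Δ c) (hSΔ : S ⊆ Δ)
    (hmax : ∀ b ∈ Δ, b ∉ S → ∀ δ ∈ Φ, ‖δ‖ ≤ ‖b‖) :
    ∀ N : ℕ, ∀ γ ∈ Φ, ∀ γ' ∈ Φ, (∀ s ∈ S, c γ s = c γ' s) →
      (∑ b ∈ Δ, |c γ' b - c γ b| ≤ (N:ℝ)) → ‖γ‖ = ‖γ'‖ := by
  intro N
  induction N with
  | zero =>
    intro γ hγ γ' hγ' hagree hsum
    have h0 : ∑ b ∈ Δ, |c γ' b - c γ b| = 0 :=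
      le_antisymm (by simpa using hsum) (Finset.sum_nonneg fun b _ => abs_nonneg _)
    have hall : ∀ b ∈ Δ, c γ' b = c γ b := by
      intro b hb
      have := (Finset.sum_eq_zero_iff_of_nonneg (fun b _ => abs_nonneg _)).mp h0 b hb
      have := abs_eq_zero.mp this
      linarith
    have heq : γ = γ' := by
      rw [hB.repr γ hγ, hB.repr γ' hγ']
      exact Finset.sum_congr rfl fun b hb => by rw [hall b hb]
    rw [heq]
  | succ n ih =>
    intro γ hγ γ' hγ' hagree hsum
    by_cases hgg : γ = γ'
    · rw [hgg]
    · have hvv : (0:ℝ) < ⟪γ' - γ, γ' - γ⟫ :=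
        lt_of_le_of_ne real_inner_self_nonneg
          (Ne.symm (inner_self_ne_zero.mpr (sub_ne_zero.mpr (Ne.symm hgg))))
      have hsplit : 0 < ⟪γ', γ' - γ⟫ ∨ 0 < ⟪γ, γ - γ'⟫ := by
        rw [inner_sub_left] at hvv
        by_cases h : 0 < ⟪γ', γ' - γ⟫
        · exact Or.inl h
        · right
          have hflip : ⟪γ, γ - γ'⟫ = -⟪γ, γ' - γ⟫ := by
            rw [← inner_neg_right, neg_sub]
          rw [hflip]
          push_neg at h
          linarith
      rcases hsplit with h1 | h1
      · rcases rs_step hΦ hB hSΔ hmax hγ hγ' hagree hgg h1 with h | ⟨γ'', hm, hn, hag, hsum'⟩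
        · exact h
        · rw [← hn]
          apply ih γ hγ γ'' hm hag
          rw [hsum']
          push_cast at hsum ⊢
          linarith
      · rcases rs_step hΦ hB hSΔ hmax hγ' hγ (fun s hs => (hagree s hs).symm)
          (Ne.symm hgg) h1 with h | ⟨γ'', hm, hn, hag, hsum'⟩
        · exact h.symm
        · have hcomm : ∑ b ∈ Δ, |c γ b - c γ' b| = ∑ b ∈ Δ, |c γ' b - c γ b| :=
            Finset.sum_congr rfl fun b _ => abs_sub_comm _ _
          have := ih γ' hγ' γ'' hm hag (by
            rw [hsum', hcomm]
            push_cast at hsum ⊢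
            linarith)
          exact (this.trans hn).symm

end RootSystemMain

/-- If `S` contains every short simple root, then all roots in `Φ_{S,β}` have the same
length. -/
theorem stmt12 (Φ Δ : Finset E) (c : E → E → ℝ)
    (hΦ : IsRootSystem Φ) (hB : IsBase Φ Δ c) (hirr : IsIrredSys Φ)
    (S : Finset E) (hS : S ⊆ Δ)
    (hshort : ∀ a ∈ Δ, (∃ δ ∈ Φ, ‖a‖ < ‖δ‖) → a ∈ S)
    (β : E) (hβ : β ∈ Φ) :
    ∀ γ ∈ lev Φ c S β, ∀ γ' ∈ lev Φ c S β, ‖γ‖ = ‖γ'‖ := by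
  have hmax : ∀ b ∈ Δ, b ∉ S → ∀ δ ∈ Φ, ‖δ‖ ≤ ‖b‖ := by
    intro b hb hbS δ hδ
    by_contra h
    exact hbS (hshort b hb ⟨δ, hδ, lt_of_not_ge h⟩)
  intro γ hγ γ' hγ'
  obtain ⟨hγΦ, hγc⟩ := hγ
  obtain ⟨hγΦ', hγc'⟩ := hγ'
  obtain ⟨N, hN⟩ := exists_nat_ge (∑ b ∈ Δ, |c γ' b - c γ b|)
  exact rs_key hΦ hB hS hmax N γ hγΦ γ' hγΦ'
    (fun s hs => (hγc s hs).trans (hγc' s hs).symm) hN
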